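/- Equivalence of OSI-Geodesic-SOR and FPI-Geodesic-SOR: Let (X_t, Y_t) be generated by X_{t+1} = X_t #_ω [(1/m)(∑ᵢ Aᵢ Y_t Aᵢᵀ)^{-1}] and Y_{t+1} = Y_t #_ω [(1/n)(∑ᵢ Aᵢᵀ X_{t+1} Aᵢ)^{-1}], with X_0 = I_m, Y_0 = I_n. Let (L̄_t, R̄_t, Ā_{t,i}) be generated by L̄_{t+1} = m^{-ω/2} (∑ᵢ Ā_{t,i} Ā_{t,i}ᵀ)^{-ω/2}, R̄_{t+1} = n^{-ω/2} (∑ᵢ Ā_{t,i}ᵀ L̄_{t+1}ᵀ L̄_{t+1} Ā_{t,i})^{-ω/2}, Ā_{t+1,i} = L̄_{t+1} Ā_{t,i} R̄_{t+1}ᵀ, starting from Ā_{0,i} = Aᵢ. Define L_{t+1} = L̄_{t+1} L_t, R_{t+1} = R̄_{t+1} R_t with L_0 = I_m, R_0 = I_n. Then for all t ≥ 0: Ā_{t,i} = L_t Aᵢ R_tᵀ for all i, X_t = L_tᵀ L_t, and Y_t = R_tᵀ R_t. -/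

import Mathlib

open Matrix BigOperators

/-- Spectral real power of a (Hermitian) real matrix: eigenvalues raised to power `ω`. -/
noncomputable def mrpow {n : ℕ} (M : Matrix (Fin n) (Fin n) ℝ) (ω : ℝ) : Matrix (Fin n) (Fin n) ℝ :=
  if h : M.IsHermitian then
    (h.eigenvectorUnitary : Matrix (Fin n) (Fin n) ℝ) *
      Matrix.diagonal (fun i => (h.eigenvalues i) ^ ω) *
      star (h.eigenvectorUnitary : Matrix (Fin n) (Fin n) ℝ)
  else M

/-- Geodesic (w.r.t. ω) between positive definite matrices:
`X #_ω X̃ = X^{1/2} (X^{-1/2} X̃ X^{-1/2})^ω X^{1/2}`. -/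
noncomputable def geo {n : ℕ} (X Xt : Matrix (Fin n) (Fin n) ℝ) (ω : ℝ) :
    Matrix (Fin n) (Fin n) ℝ :=
  mrpow X (1/2) * mrpow (mrpow X (-(1/2)) * Xt * mrpow X (-(1/2))) ω * mrpow X (1/2)

section Aux
variable {N : ℕ}
lemma specFin (M : Matrix (Fin N) (Fin N) ℝ) : (spectrum ℝ M).Finite :=
  M.finite_real_spectrum
lemma specContIm' : True := trivial
lemma specCont (f : ℝ → ℝ) (M : Matrix (Fin N) (Fin N) ℝ) :
    ContinuousOn f (spectrum ℝ M) := (specFin M).continuousOn f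
lemma mrpow_eq_cfc {M : Matrix (Fin N) (Fin N) ℝ} (hM : M.IsHermitian) (ω : ℝ) :
    mrpow M ω = cfc (fun x : ℝ => x ^ ω) M := by
  rw [mrpow, dif_pos hM, hM.cfc_eq, Matrix.IsHermitian.cfc]
  congr 1
lemma mrpow_isHermitian {M : Matrix (Fin N) (Fin N) ℝ} (hM : M.IsHermitian) (ω : ℝ) :
    (mrpow M ω).IsHermitian := by
  rw [mrpow_eq_cfc hM]
  exact cfc_predicate (fun x : ℝ => x ^ ω) M
lemma spec_pos {M : Matrix (Fin N) (Fin N) ℝ} (hM : M.PosDef) :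
    ∀ x ∈ spectrum ℝ M, 0 < x := by
  intro x hx
  rw [Matrix.IsHermitian.spectrum_real_eq_range_eigenvalues hM.1] at hx
  obtain ⟨i, rfl⟩ := hx
  exact hM.eigenvalues_pos i
lemma mrpow_mul {M : Matrix (Fin N) (Fin N) ℝ} (hM : M.PosDef) (a b : ℝ) :
    mrpow M a * mrpow M b = mrpow M (a + b) := by
  rw [mrpow_eq_cfc hM.1, mrpow_eq_cfc hM.1, mrpow_eq_cfc hM.1,
    ← cfc_mul _ _ M (specCont _ M) (specCont _ M)]
  exact cfc_congr fun x hx => (Real.rpow_add (spec_pos hM x hx) a b).symm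
lemma mrpow_zero {M : Matrix (Fin N) (Fin N) ℝ} (hM : M.IsHermitian) :
    mrpow M 0 = 1 := by
  rw [mrpow_eq_cfc hM]
  have : cfc (fun x : ℝ => x ^ (0:ℝ)) M = cfc (fun _ : ℝ => (1:ℝ)) M :=
    cfc_congr fun x _ => Real.rpow_zero x
  rw [this]
  exact cfc_const_one ℝ M hM

-- new material
lemma mrpow_isUnit {M : Matrix (Fin N) (Fin N) ℝ} (hM : M.PosDef) (ω : ℝ) :
    IsUnit (mrpow M ω) := by
  have h : mrpow M ω * mrpow M (-ω) = 1 := by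
    rw [mrpow_mul hM, add_neg_cancel, mrpow_zero hM.1]
  exact @isUnit_of_invertible _ _ _ (invertibleOfRightInverse _ _ h)

lemma herm_transpose {M : Matrix (Fin N) (Fin N) ℝ} (h : M.IsHermitian) : Mᵀ = M := by
  rw [← Matrix.conjTranspose_eq_transpose_of_trivial]; exact h

lemma posDef_transpose_mul_self {Lm : Matrix (Fin N) (Fin N) ℝ} (hL : IsUnit Lm) :
    (Lmᵀ * Lm).PosDef := by
  refine Matrix.PosDef.of_dotProduct_mulVec_pos
    (by simpa [Matrix.conjTranspose_eq_transpose_of_trivial] using Matrix.isHermitian_conjTranspose_mul_self Lm) fun x hx => ?_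
  have hinj : Function.Injective Lm.mulVec := Matrix.mulVec_injective_iff_isUnit.mpr hL
  have hLx : Lm.mulVec x ≠ 0 := by
    intro h0
    exact hx (hinj (by simpa using h0))
  have : star x ⬝ᵥ (Lmᵀ * Lm) *ᵥ x = star (Lm *ᵥ x) ⬝ᵥ (Lm *ᵥ x) := by
    rw [← Matrix.mulVec_mulVec, Matrix.dotProduct_mulVec, Matrix.vecMul_transpose]
    simp
  rw [this]
  exact Matrix.dotProduct_star_self_pos_iff.mpr hLx

lemma mrpow_smul_inv {S : Matrix (Fin N) (Fin N) ℝ} (hS : S.PosDef) {c : ℝ} (hc : 0 < c)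
    (ω : ℝ) : mrpow (c • S⁻¹) ω = c ^ ω • mrpow S (-ω) := by
  have hSh : S.IsHermitian := hS.1
  have hinv : S⁻¹ = cfc (fun x : ℝ => x⁻¹) S := by
    have h1 : cfc (fun x : ℝ => x⁻¹) S * cfc (fun x : ℝ => x) S = 1 := by
      rw [← cfc_mul _ _ S (specCont _ S) (specCont _ S)]
      have : cfc (fun x : ℝ => x⁻¹ * x) S = cfc (fun _ : ℝ => (1:ℝ)) S :=
        cfc_congr fun x hx => inv_mul_cancel₀ (ne_of_gt (spec_pos hS x hx))
      rw [this]
      exact cfc_const_one ℝ S hSh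
    rw [show cfc (fun x : ℝ => x) S = S from cfc_id' ℝ S hSh] at h1
    exact Matrix.inv_eq_left_inv h1
  have hsmul : c • S⁻¹ = cfc (fun x : ℝ => c * x⁻¹) S := by
    rw [hinv, ← cfc_const_mul c (fun x : ℝ => x⁻¹) S (specCont _ S)]
  calc mrpow (c • S⁻¹) ω
      = cfc (fun x : ℝ => x ^ ω) (cfc (fun x : ℝ => c * x⁻¹) S) := by
        rw [hsmul]; exact mrpow_eq_cfc (cfc_predicate _ S) ω
    _ = cfc (fun x : ℝ => (c * x⁻¹) ^ ω) S :=
        (cfc_comp' (fun x : ℝ => x ^ ω) (fun x : ℝ => c * x⁻¹) S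
          (((specFin S).image _).continuousOn _) (specCont _ S) hSh).symm
    _ = cfc (fun x : ℝ => c ^ ω * x ^ (-ω)) S := by
        refine cfc_congr fun x hx => ?_
        have hx' : 0 < x := spec_pos hS x hx
        rw [Real.mul_rpow hc.le (inv_nonneg.mpr hx'.le), Real.inv_rpow hx'.le,
          ← Real.rpow_neg hx'.le]
    _ = c ^ ω • cfc (fun x : ℝ => x ^ (-ω)) S := cfc_const_mul _ _ S (specCont _ S)
    _ = c ^ ω • mrpow S (-ω) := by rw [mrpow_eq_cfc hSh]

noncomputable def conjHom {N : ℕ} (U : Matrix (Fin N) (Fin N) ℝ) (hU : Uᵀ * U = 1)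
    (hU' : U * Uᵀ = 1) :
    Matrix (Fin N) (Fin N) ℝ →⋆ₐ[ℝ] Matrix (Fin N) (Fin N) ℝ where
  toFun X := U * X * Uᵀ
  map_one' := by show U * 1 * Uᵀ = 1; rw [mul_one, hU']
  map_mul' X Y := by
    show U * (X * Y) * Uᵀ = (U * X * Uᵀ) * (U * Y * Uᵀ)
    simp only [Matrix.mul_assoc]
    rw [← Matrix.mul_assoc Uᵀ U, hU, one_mul]
  map_zero' := by show U * 0 * Uᵀ = 0; simp
  map_add' X Y := by
    show U * (X + Y) * Uᵀ = U * X * Uᵀ + U * Y * Uᵀ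
    rw [mul_add, add_mul]
  commutes' r := by
    show U * algebraMap ℝ _ r * Uᵀ = algebraMap ℝ _ r
    simp only [Algebra.algebraMap_eq_smul_one]
    rw [Matrix.mul_smul, mul_one, Matrix.smul_mul, hU']
  map_star' X := by
    show U * star X * Uᵀ = star (U * X * Uᵀ)
    simp only [star_eq_conjTranspose, Matrix.conjTranspose_mul,
      Matrix.conjTranspose_eq_transpose_of_trivial, Matrix.transpose_transpose,
      Matrix.transpose_mul, Matrix.mul_assoc]

lemma mrpow_conj {U M : Matrix (Fin N) (Fin N) ℝ} (hM : M.IsHermitian)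
    (hU : Uᵀ * U = 1) (ω : ℝ) :
    mrpow (U * M * Uᵀ) ω = U * mrpow M ω * Uᵀ := by
  have hU' : U * Uᵀ = 1 := mul_eq_one_comm.mp hU
  have hMt : Mᵀ = M := herm_transpose hM
  have hconj : (U * M * Uᵀ).IsHermitian := by
    show (U * M * Uᵀ)ᴴ = _
    simp only [Matrix.conjTranspose_mul, Matrix.conjTranspose_eq_transpose_of_trivial,
      Matrix.transpose_mul, Matrix.transpose_transpose, hMt, Matrix.mul_assoc]
  have key := StarAlgHomClass.map_cfc (S := ℝ) (conjHom U hU hU') (fun x : ℝ => x ^ ω) M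
    (specCont _ M)
    (by
      show Continuous fun X : Matrix (Fin N) (Fin N) ℝ => U * X * Uᵀ
      exact (continuous_const.matrix_mul continuous_id).matrix_mul continuous_const)
    hM hconj
  calc mrpow (U * M * Uᵀ) ω = cfc (fun x : ℝ => x ^ ω) (U * M * Uᵀ) := mrpow_eq_cfc hconj ω
    _ = conjHom U hU hU' (cfc (fun x : ℝ => x ^ ω) M) := key.symm
    _ = U * mrpow M ω * Uᵀ := by rw [mrpow_eq_cfc hM]; rfl

lemma mrpow_one {M : Matrix (Fin N) (Fin N) ℝ} (hM : M.IsHermitian) :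
    mrpow M 1 = M := by
  rw [mrpow_eq_cfc hM]
  have : cfc (fun x : ℝ => x ^ (1:ℝ)) M = cfc (fun x : ℝ => x) M :=
    cfc_congr fun x _ => Real.rpow_one x
  rw [this]
  exact cfc_id' ℝ M hM

lemma isUnit_smul_mrpow {S : Matrix (Fin N) (Fin N) ℝ} (hS : S.PosDef) {c : ℝ}
    (hc : c ≠ 0) (r : ℝ) : IsUnit (c • mrpow S r) := by
  have h : (c • mrpow S r) * (c⁻¹ • mrpow S (-r)) = 1 := by
    rw [Matrix.smul_mul, Matrix.mul_smul, smul_smul, mrpow_mul hS, add_neg_cancel,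
      mrpow_zero hS.1, mul_inv_cancel₀ hc, one_smul]
  exact @isUnit_of_invertible _ _ _ (invertibleOfRightInverse _ _ h)

lemma geo_eq {Xo Z Lm : Matrix (Fin N) (Fin N) ℝ} (hZ : Z.IsHermitian) (hL : IsUnit Lm)
    (hX : Xo = Lmᵀ * Lm) (ω : ℝ) :
    geo Xo Z ω = Lmᵀ * mrpow ((Lmᵀ)⁻¹ * Z * Lm⁻¹) ω * Lm := by
  have hXo : Xo.PosDef := hX ▸ posDef_transpose_mul_self hL
  unfold geo
  set P := mrpow Xo (1/2) with hPdef
  set Q := mrpow Xo (-(1/2)) with hQdef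
  have hP : P.IsHermitian := mrpow_isHermitian hXo.1 _
  have hQ : Q.IsHermitian := mrpow_isHermitian hXo.1 _
  have hPQ : P * Q = 1 := by
    rw [hPdef, hQdef, mrpow_mul hXo, show (1/2 : ℝ) + -(1/2) = 0 by norm_num]
    exact mrpow_zero hXo.1
  have hQP : Q * P = 1 := by
    rw [hQdef, hPdef, mrpow_mul hXo, show (-(1/2) : ℝ) + 1/2 = 0 by norm_num]
    exact mrpow_zero hXo.1
  have hPP : P * P = Xo := by
    rw [hPdef, mrpow_mul hXo, show (1/2 : ℝ) + 1/2 = 1 by norm_num]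
    exact mrpow_one hXo.1
  have hQt : Qᵀ = Q := herm_transpose hQ
  have hPt : Pᵀ = P := herm_transpose hP
  set U := Lm * Q with hUdef
  have hUtU : Uᵀ * U = 1 := by
    rw [hUdef, Matrix.transpose_mul, hQt]
    calc Q * Lmᵀ * (Lm * Q) = Q * Xo * Q := by rw [hX]; simp only [Matrix.mul_assoc]
      _ = Q * P * (P * Q) := by rw [← hPP]; simp only [Matrix.mul_assoc]
      _ = 1 := by rw [hQP, hPQ, one_mul]
  have hUUt : U * Uᵀ = 1 := mul_eq_one_comm.mp hUtU
  have hUL : U * P = Lm := by rw [hUdef, Matrix.mul_assoc, hQP, mul_one]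
  have hLinv : Lm⁻¹ = Q * Uᵀ :=
    Matrix.inv_eq_right_inv (by rw [← Matrix.mul_assoc, ← hUdef, hUUt])
  have hLtinv : (Lmᵀ)⁻¹ = U * Q := by
    rw [← Matrix.transpose_nonsing_inv, hLinv, Matrix.transpose_mul, hQt,
      Matrix.transpose_transpose]
  have harg : (Lmᵀ)⁻¹ * Z * Lm⁻¹ = U * (Q * Z * Q) * Uᵀ := by
    rw [hLtinv, hLinv]; simp only [Matrix.mul_assoc]
  have hZt : Zᵀ = Z := herm_transpose hZ
  have hQZQ : (Q * Z * Q).IsHermitian := by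
    show _ᴴ = _
    simp only [Matrix.conjTranspose_mul, Matrix.conjTranspose_eq_transpose_of_trivial,
      Matrix.transpose_mul, Matrix.transpose_transpose, hQt, hZt, Matrix.mul_assoc]
  have cancel : ∀ V : Matrix (Fin N) (Fin N) ℝ, Uᵀ * (U * V) = V := fun V => by
    rw [← Matrix.mul_assoc, hUtU, one_mul]
  rw [harg, mrpow_conj hQZQ hUtU, ← hUL, Matrix.transpose_mul, hPt]
  simp only [Matrix.mul_assoc]
  rw [cancel, cancel]

lemma step_geo {c : ℝ} (hc : 0 < c) {B S Xo Lo : Matrix (Fin N) (Fin N) ℝ}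
    (hB : B.PosDef) (hS : S.PosDef) (hLo : IsUnit Lo) (hXo : Xo = Loᵀ * Lo)
    (hSB : S = Lo * B * Loᵀ) (ω : ℝ) :
    geo Xo (c • B⁻¹) ω = Loᵀ * (c ^ ω • mrpow S (-ω)) * Lo := by
  have hZ : (c • B⁻¹).IsHermitian := by
    show _ᴴ = _
    rw [Matrix.conjTranspose_smul, star_trivial, hB.inv.1]
  rw [geo_eq hZ hLo hXo ω]
  have hSinv : (Loᵀ)⁻¹ * (c • B⁻¹) * Lo⁻¹ = c • S⁻¹ := by
    rw [hSB, Matrix.mul_inv_rev, Matrix.mul_inv_rev, Matrix.mul_smul, Matrix.smul_mul]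
    congr 1
    simp only [Matrix.mul_assoc]
  rw [hSinv, mrpow_smul_inv hS hc ω]

lemma lb_sq {S : Matrix (Fin N) (Fin N) ℝ} (hS : S.PosDef) {c : ℝ} (hc : 0 < c) (ω : ℝ) :
    (c ^ (-ω/2) • mrpow S (-ω/2))ᵀ * (c ^ (-ω/2) • mrpow S (-ω/2))
      = c ^ (-ω) • mrpow S (-ω) := by
  rw [Matrix.transpose_smul, herm_transpose (mrpow_isHermitian hS.1 _), Matrix.smul_mul,
    Matrix.mul_smul, smul_smul, mrpow_mul hS, ← Real.rpow_add hc,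
    show -ω/2 + -ω/2 = -ω by ring]
end Aux

theorem stmt_12 {m n k : ℕ} (A : Fin k → Matrix (Fin m) (Fin n) ℝ) (ω : ℝ) (hω : 0 < ω)
    (X L : ℕ → Matrix (Fin m) (Fin m) ℝ) (Y R : ℕ → Matrix (Fin n) (Fin n) ℝ)
    (Ab : ℕ → Fin k → Matrix (Fin m) (Fin n) ℝ)
    (Lb : ℕ → Matrix (Fin m) (Fin m) ℝ) (Rb : ℕ → Matrix (Fin n) (Fin n) ℝ)
    -- FPI-Geodesic-SOR iteration
    (hX0 : X 0 = 1) (hY0 : Y 0 = 1)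
    (hXpd : ∀ t, (∑ i, A i * Y t * (A i)ᵀ).PosDef)
    (hXrec : ∀ t, X (t + 1) = geo (X t) (((m : ℝ))⁻¹ • (∑ i, A i * Y t * (A i)ᵀ)⁻¹) ω)
    (hYpd : ∀ t, (∑ i, (A i)ᵀ * X (t + 1) * A i).PosDef)
    (hYrec : ∀ t, Y (t + 1) = geo (Y t) (((n : ℝ))⁻¹ • (∑ i, (A i)ᵀ * X (t + 1) * A i)⁻¹) ω)
    -- OSI-Geodesic-SOR iteration
    (hAb0 : ∀ i, Ab 0 i = A i)
    (hLbpd : ∀ t, (∑ i, Ab t i * (Ab t i)ᵀ).PosDef)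
    (hLbrec : ∀ t, Lb (t + 1) = (m : ℝ) ^ (-ω / 2) • mrpow (∑ i, Ab t i * (Ab t i)ᵀ) (-ω / 2))
    (hRbpd : ∀ t, (∑ i, (Ab t i)ᵀ * ((Lb (t + 1))ᵀ * Lb (t + 1)) * Ab t i).PosDef)
    (hRbrec : ∀ t, Rb (t + 1) =
      (n : ℝ) ^ (-ω / 2) • mrpow (∑ i, (Ab t i)ᵀ * ((Lb (t + 1))ᵀ * Lb (t + 1)) * Ab t i) (-ω / 2))
    (hAbrec : ∀ t i, Ab (t + 1) i = Lb (t + 1) * Ab t i * (Rb (t + 1))ᵀ)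
    -- accumulated scalings
    (hL0 : L 0 = 1) (hR0 : R 0 = 1)
    (hLrec : ∀ t, L (t + 1) = Lb (t + 1) * L t)
    (hRrec : ∀ t, R (t + 1) = Rb (t + 1) * R t) :
    ∀ t : ℕ, (∀ i, Ab t i = L t * A i * (R t)ᵀ) ∧
      X t = (L t)ᵀ * L t ∧ Y t = (R t)ᵀ * R t := by
  suffices H : ∀ t : ℕ, (∀ i, Ab t i = L t * A i * (R t)ᵀ) ∧
      (X t = (L t)ᵀ * L t) ∧ (Y t = (R t)ᵀ * R t) ∧ IsUnit (L t) ∧ IsUnit (R t) by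
    exact fun t => ⟨(H t).1, (H t).2.1, (H t).2.2.1⟩
  intro t
  induction t with
  | zero =>
    refine ⟨fun i => ?_, ?_, ?_, ?_, ?_⟩
    · rw [hAb0, hL0, hR0, Matrix.transpose_one, Matrix.one_mul, Matrix.mul_one]
    · rw [hX0, hL0, Matrix.transpose_one, one_mul]
    · rw [hY0, hR0, Matrix.transpose_one, one_mul]
    · rw [hL0]; exact isUnit_one
    · rw [hR0]; exact isUnit_one
  | succ t IH =>
    obtain ⟨hA, hX, hY, hLu, hRu⟩ := IH
    -- the X step
    have hSB : (∑ i, Ab t i * (Ab t i)ᵀ)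
        = L t * (∑ i, A i * Y t * (A i)ᵀ) * (L t)ᵀ := by
      rw [Finset.mul_sum, Finset.sum_mul]
      refine Finset.sum_congr rfl fun i _ => ?_
      simp only [hA, hY, Matrix.transpose_mul, Matrix.transpose_transpose, Matrix.mul_assoc]
    have hXstep : X (t + 1) = (L (t + 1))ᵀ * L (t + 1) ∧ IsUnit (L (t + 1)) := by
      rcases Nat.eq_zero_or_pos m with hm | hm
      · haveI : Subsingleton (Matrix (Fin m) (Fin m) ℝ) := by
          subst hm
          exact ⟨fun a b => by ext i j; exact i.elim0⟩
        exact ⟨Subsingleton.elim _ _, isUnit_of_subsingleton _⟩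
      · have hm' : (0 : ℝ) < (m : ℝ) := by exact_mod_cast hm
        have hgeo := step_geo (inv_pos.mpr hm') (hXpd t) (hLbpd t) hLu hX hSB ω
        have hbb := lb_sq (hLbpd t) hm' ω
        constructor
        · rw [hXrec t, hgeo, hLrec t, hLbrec t, Matrix.transpose_mul,
            show ((m : ℝ)⁻¹) ^ ω = (m : ℝ) ^ (-ω) by
              rw [Real.inv_rpow (Nat.cast_nonneg m), Real.rpow_neg (Nat.cast_nonneg m)],
            ← hbb]
          simp only [Matrix.mul_assoc]
        · rw [hLrec t, hLbrec t]
          exact (isUnit_smul_mrpow (hLbpd t)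
            (Real.rpow_pos_of_pos hm' _).ne' _).mul hLu
    obtain ⟨hXs, hLu'⟩ := hXstep
    -- the Y step
    have hS'B' : (∑ i, (Ab t i)ᵀ * ((Lb (t + 1))ᵀ * Lb (t + 1)) * Ab t i)
        = R t * (∑ i, (A i)ᵀ * X (t + 1) * A i) * (R t)ᵀ := by
      rw [Finset.mul_sum, Finset.sum_mul]
      refine Finset.sum_congr rfl fun i _ => ?_
      simp only [hA, hXs, hLrec, Matrix.transpose_mul, Matrix.transpose_transpose,
        Matrix.mul_assoc]
    have hYstep : Y (t + 1) = (R (t + 1))ᵀ * R (t + 1) ∧ IsUnit (R (t + 1)) := by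
      rcases Nat.eq_zero_or_pos n with hn | hn
      · haveI : Subsingleton (Matrix (Fin n) (Fin n) ℝ) := by
          subst hn
          exact ⟨fun a b => by ext i j; exact i.elim0⟩
        exact ⟨Subsingleton.elim _ _, isUnit_of_subsingleton _⟩
      · have hn' : (0 : ℝ) < (n : ℝ) := by exact_mod_cast hn
        have hgeo := step_geo (inv_pos.mpr hn') (hYpd t) (hRbpd t) hRu hY hS'B' ω
        have hbb := lb_sq (hRbpd t) hn' ω
        constructor
        · rw [hYrec t, hgeo, hRrec t, hRbrec t, Matrix.transpose_mul,
            show ((n : ℝ)⁻¹) ^ ω = (n : ℝ) ^ (-ω) by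
              rw [Real.inv_rpow (Nat.cast_nonneg n), Real.rpow_neg (Nat.cast_nonneg n)],
            ← hbb]
          simp only [Matrix.mul_assoc]
        · rw [hRrec t, hRbrec t]
          exact (isUnit_smul_mrpow (hRbpd t)
            (Real.rpow_pos_of_pos hn' _).ne' _).mul hRu
    obtain ⟨hYs, hRu'⟩ := hYstep
    refine ⟨fun i => ?_, hXs, hYs, hLu', hRu'⟩
    rw [hAbrec t i, hA i, hLrec t, hRrec t, Matrix.transpose_mul]
    simp only [Matrix.mul_assoc]
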